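/- Let n be a positive integer, f : ℝⁿ → ℝⁿ, let 𝒳ᵤ ⊆ ℝⁿ, and let ε₁ > 0. Suppose B : ℝⁿ → ℝ is continuously differentiable, B(x) > 0 for all x ∈ 𝒳ᵤ, and ⟨∇B(x), f(x)⟩ ≤ 0 for all x ∈ ℝⁿ with |B(x)| ≤ √ε₁. Define the certified safe set 𝒳ₛ := {x ∈ ℝⁿ : B(x) ≤ 0}. Then every trajectory starting in 𝒳ₛ never enters 𝒳ᵤ: if x : ℝ → ℝⁿ is differentiable with x′(t) = f(x(t)) for all t ≥ 0 and x(0) ∈ 𝒳ₛ, then x(t) ∉ 𝒳ᵤ for all t ≥ 0. -/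

import Mathlib

/-- Trajectories starting in the certified safe set `𝒳ₛ = {x : B x ≤ 0}` never enter
the unsafe set `𝒳ᵤ`. -/
theorem certified_safe_set_safety
    (n : ℕ) (hn : 0 < n)
    (f : EuclideanSpace ℝ (Fin n) → EuclideanSpace ℝ (Fin n))
    (Xu : Set (EuclideanSpace ℝ (Fin n)))
    (ε₁ : ℝ) (hε₁ : 0 < ε₁)
    (B : EuclideanSpace ℝ (Fin n) → ℝ)
    (hB : ContDiff ℝ 1 B)
    (hBu : ∀ x ∈ Xu, 0 < B x)
    (hBlie : ∀ x : EuclideanSpace ℝ (Fin n),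
      |B x| ≤ Real.sqrt ε₁ → fderiv ℝ B x (f x) ≤ 0)
    (Xs : Set (EuclideanSpace ℝ (Fin n)))
    (hXs : Xs = {x : EuclideanSpace ℝ (Fin n) | B x ≤ 0})
    (x : ℝ → EuclideanSpace ℝ (Fin n))
    (hx : Differentiable ℝ x)
    (hode : ∀ t : ℝ, 0 ≤ t → deriv x t = f (x t))
    (hinit : x 0 ∈ Xs) :
    ∀ t : ℝ, 0 ≤ t → x t ∉ Xu := by
  subst hXs
  intro t ht hxt
  set g : ℝ → ℝ := fun u => B (x u) with hgdef
  have hBd : Differentiable ℝ B := hB.differentiable one_ne_zero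
  have hgd : Differentiable ℝ g := hBd.comp hx
  have hgderiv : ∀ u : ℝ, 0 ≤ u → deriv g u = fderiv ℝ B (x u) (f (x u)) := by
    intro u hu
    have h1 : HasDerivAt g (fderiv ℝ B (x u) (deriv x u)) u :=
      (hBd (x u)).hasFDerivAt.comp_hasDerivAt u (hx u).hasDerivAt
    rw [hode u hu] at h1
    exact h1.deriv
  have hgt : 0 < g t := hBu _ hxt
  have hg0 : g 0 ≤ 0 := hinit
  have htpos : 0 < t := by
    rcases lt_or_eq_of_le ht with h | h
    · exact h
    · exfalso; rw [← h] at hgt; linarith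
  set S : Set ℝ := {u | u ∈ Set.Icc 0 t ∧ g u ≤ 0} with hS
  have hSne : S.Nonempty := ⟨0, ⟨le_refl 0, le_of_lt htpos⟩, hg0⟩
  have hSbdd : BddAbove S := ⟨t, fun u hu => hu.1.2⟩
  have hSclosed : IsClosed S := by
    have : S = Set.Icc 0 t ∩ g ⁻¹' Set.Iic 0 := by
      ext u; simp only [hS, Set.mem_setOf_eq, Set.mem_inter_iff, Set.mem_preimage,
        Set.mem_Iic]
    rw [this]; exact isClosed_Icc.inter (isClosed_Iic.preimage hgd.continuous)
  set s := sSup S with hs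
  have hsS : s ∈ S := hSclosed.csSup_mem hSne hSbdd
  have hs0 : 0 ≤ s := hsS.1.1
  have hst : s ≤ t := hsS.1.2
  have hgs : g s ≤ 0 := hsS.2
  have hslt : s < t := lt_of_le_of_ne hst (by intro h; rw [h] at hgs; linarith)
  have hpos : ∀ u, s < u → u ≤ t → 0 < g u := by
    intro u h1 h2
    by_contra h
    push_neg at h
    have hu : u ∈ S := ⟨⟨le_trans hs0 h1.le, h2⟩, h⟩
    exact absurd (le_csSup hSbdd hu) (not_le.mpr h1)
  set c := min (Real.sqrt ε₁) (g t) with hc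
  have hcpos : 0 < c := lt_min (Real.sqrt_pos.mpr hε₁) hgt
  set T : Set ℝ := {u | u ∈ Set.Icc s t ∧ c ≤ g u} with hT
  have hTne : T.Nonempty := ⟨t, ⟨hst, le_refl t⟩, min_le_right _ _⟩
  have hTbdd : BddBelow T := ⟨s, fun u hu => hu.1.1⟩
  have hTclosed : IsClosed T := by
    have : T = Set.Icc s t ∩ g ⁻¹' Set.Ici c := by
      ext u; simp only [hT, Set.mem_setOf_eq, Set.mem_inter_iff, Set.mem_preimage,
        Set.mem_Ici]
    rw [this]; exact isClosed_Icc.inter (isClosed_Ici.preimage hgd.continuous)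
  set t₂ := sInf T with ht₂def
  have ht₂T : t₂ ∈ T := hTclosed.csInf_mem hTne hTbdd
  have hst₂ : s < t₂ := by
    rcases lt_or_eq_of_le ht₂T.1.1 with h | h
    · exact h
    · exfalso; have := ht₂T.2; rw [← h] at this; linarith
  have hbelow : ∀ u, s ≤ u → u < t₂ → g u < c := by
    intro u h1 h2
    by_contra h
    push_neg at h
    have hu : u ∈ T := ⟨⟨h1, le_trans h2.le ht₂T.1.2⟩, h⟩
    exact absurd (csInf_le hTbdd hu) (not_le.mpr h2)
  have hanti : AntitoneOn g (Set.Icc s t₂) := by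
    apply antitoneOn_of_deriv_nonpos (convex_Icc s t₂) hgd.continuous.continuousOn
      (hgd.differentiableOn.mono interior_subset)
    intro u hu
    rw [interior_Icc] at hu
    have hgu : 0 < g u := hpos u hu.1 (le_trans hu.2.le ht₂T.1.2)
    have hgu2 : g u < c := hbelow u hu.1.le hu.2
    rw [hgderiv u (le_trans hs0 hu.1.le)]
    exact hBlie (x u) (by rw [abs_of_pos hgu]; exact le_trans hgu2.le (min_le_left _ _))
  have hfinal := hanti (Set.left_mem_Icc.mpr hst₂.le) (Set.right_mem_Icc.mpr hst₂.le) hst₂.le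
  linarith [ht₂T.2]
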